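/- There exists an absolute constant C > 0 (independent of n) such that for every n ∈ ℕ with n ≥ 1, every a > 0, and every multi-index β ∈ ℕⁿ: ( ∫_{ℝⁿ} |ξ^{2β}| e^{−a|ξ|} dξ )^{1/2} ≤ (2n/a)^{n/2} · β! · (Cn/a)^{|β|}, where ξ^{2β} = ∏_{i=1}^n ξᵢ^{2βᵢ}, β! = ∏_{i=1}^n βᵢ!, and |β| = Σ_{i=1}^n βᵢ. -/

import Mathlib

open MeasureTheory
open scoped Real BigOperators
open Set

lemma two_mul_factorial_le (k : ℕ) : (2 * k).factorial ≤ 4 ^ k * k.factorial ^ 2 := by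
  induction k with
  | zero => simp
  | succ k ih =>
    have h1 : 2 * (k + 1) = (2 * k + 1) + 1 := by ring
    rw [h1, Nat.factorial_succ, Nat.factorial_succ]
    calc (2*k+1+1) * ((2*k+1) * (2*k).factorial)
        ≤ (2*k+1+1) * ((2*k+1) * (4^k * k.factorial^2)) :=
          Nat.mul_le_mul_left _ (Nat.mul_le_mul_left _ ih)
      _ = ((2*k+1+1)*(2*k+1)) * (4^k * k.factorial^2) := by ring
      _ ≤ (4*(k+1)^2) * (4^k * k.factorial^2) :=
          Nat.mul_le_mul_right _ (by nlinarith)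
      _ = 4^(k+1) * ((k+1) * k.factorial)^2 := by ring
      _ = 4^(k+1) * ((k+1).factorial)^2 := by rw [Nat.factorial_succ]

lemma integrable1d {b : ℝ} (hb : 0 < b) (m : ℕ) :
    Integrable (fun t : ℝ => |t| ^ m * Real.exp (-b * |t|)) := by
  have hIoi : IntegrableOn (fun t : ℝ => |t| ^ m * Real.exp (-b * |t|)) (Ioi 0) := by
    have h := integrableOn_rpow_mul_exp_neg_mul_rpow (p := 1) (s := (m:ℝ))
      (by linarith [Nat.cast_nonneg (α := ℝ) m]) one_pos hb
    refine h.congr_fun (fun x hx => ?_) measurableSet_Ioi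
    dsimp only; rw [Real.rpow_natCast, Real.rpow_one, abs_of_pos (mem_Ioi.mp hx)]
  have hIic : IntegrableOn (fun t : ℝ => |t| ^ m * Real.exp (-b * |t|)) (Iic 0) := by
    rw [← Measure.map_neg_eq_self (volume : Measure ℝ)]
    have me : MeasurableEmbedding fun x : ℝ => -x := (Homeomorph.neg ℝ).measurableEmbedding
    rw [me.integrableOn_map_iff]
    simp_rw [Function.comp_def, abs_neg, neg_preimage, neg_Iic, neg_zero]
    exact Iff.mpr integrableOn_Ici_iff_integrableOn_Ioi hIoi
  have := hIic.union hIoi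
  rwa [Iic_union_Ioi, integrableOn_univ] at this

lemma oneDIntegral {b : ℝ} (hb : 0 < b) (m : ℕ) :
    ∫ t : ℝ, |t| ^ m * Real.exp (-b * |t|) = 2 * (m.factorial / b ^ (m + 1)) := by
  rw [integral_comp_abs (f := fun s : ℝ => s ^ m * Real.exp (-b * s))]
  have h := Real.integral_rpow_mul_exp_neg_mul_Ioi (a := (m:ℝ)+1) (r := b)
    (by positivity) hb
  simp only [add_sub_cancel_right] at h
  rw [show (∫ x in Ioi (0:ℝ), x ^ m * Real.exp (-b * x))
      = ∫ t in Ioi (0:ℝ), t ^ ((m:ℝ)) * Real.exp (-(b * t)) by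
    refine setIntegral_congr_fun measurableSet_Ioi (fun x hx => ?_)
    rw [Real.rpow_natCast, neg_mul], h]
  rw [Real.Gamma_nat_eq_factorial,
    show ((m:ℝ)+1) = ((m+1:ℕ):ℝ) by push_cast; ring, Real.rpow_natCast,
    div_pow, one_pow]
  ring

lemma factor_le {a s : ℝ} {n : ℕ} (ha : 0 < a) (hs0 : 0 < s) (hsn : s ≤ n) (k : ℕ) :
    2 * (((2*k).factorial : ℝ) / (a/s)^(2*k+1)) ≤
      (2*n/a) * ((k.factorial : ℝ))^2 * ((2*n/a)^2)^k := by
  have hn0 : (0:ℝ) < n := lt_of_lt_of_le hs0 hsn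
  have hfac : ((2*k).factorial : ℝ) ≤ 4^k * (k.factorial:ℝ)^2 := by
    exact_mod_cast two_mul_factorial_le k
  have hpow : s^(2*k+1) ≤ (n:ℝ)^(2*k+1) := pow_le_pow_left₀ hs0.le hsn _
  have core : 2 * ((2*k).factorial : ℝ) * s^(2*k+1)
      ≤ 2*(n:ℝ)*(k.factorial:ℝ)^2*(4*(n:ℝ)^2)^k := by
    calc 2 * ((2*k).factorial : ℝ) * s^(2*k+1)
        ≤ 2 * (4^k * (k.factorial:ℝ)^2) * (n:ℝ)^(2*k+1) :=
          mul_le_mul (by nlinarith) hpow (pow_nonneg hs0.le _) (by positivity)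
      _ = 2*(n:ℝ)*(k.factorial:ℝ)^2*(4*(n:ℝ)^2)^k := by ring
  have hL : 2 * (((2*k).factorial : ℝ) / (a/s)^(2*k+1))
      = 2 * ((2*k).factorial : ℝ) * s^(2*k+1) / a^(2*k+1) := by
    rw [div_pow]; field_simp
  have hR : (2*n/a) * ((k.factorial : ℝ))^2 * ((2*n/a)^2)^k
      = 2*(n:ℝ)*(k.factorial:ℝ)^2*(4*(n:ℝ)^2)^k / a^(2*k+1) := by
    rw [div_pow, div_pow, mul_pow (2:ℝ), show (2:ℝ)^2 = 4 by norm_num]; field_simp; ring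
  rw [hL, hR]
  exact (div_le_div_iff_of_pos_right (by positivity)).mpr core

/-- Lemma 2.1: there is an absolute constant `C > 0` (independent of `n`) such that for each
`n ≥ 1`, `a > 0` and multi-index `β ∈ ℕⁿ`,
`(∫ |ξ^{2β}| e^{-a|ξ|} dξ)^{1/2} ≤ (2n/a)^{n/2} β! (Cn/a)^{|β|}`. -/
theorem euler_integral_estimate :
    ∃ C > (0 : ℝ),
      ∀ n : ℕ, 1 ≤ n → ∀ a : ℝ, 0 < a → ∀ β : Fin n → ℕ,
        (∫ ξ : EuclideanSpace ℝ (Fin n),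
            |∏ i, ξ i ^ (2 * β i)| * Real.exp (-a * ‖ξ‖)) ^ ((1 : ℝ) / 2) ≤
          (2 * n / a) ^ ((n : ℝ) / 2) * ((∏ i, Nat.factorial (β i) : ℕ) : ℝ) *
            (C * n / a) ^ (∑ i, β i) := by
  refine ⟨2, by norm_num, ?_⟩
  intro n hn a ha β
  have hn1 : (1:ℝ) ≤ n := by exact_mod_cast hn
  have hn0 : (0:ℝ) < n := by linarith
  set s : ℝ := Real.sqrt n with hsdef
  have hs0 : 0 < s := Real.sqrt_pos.mpr hn0
  have hs2 : s ^ 2 = n := Real.sq_sqrt hn0.le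
  have hs1 : 1 ≤ s := by nlinarith
  have hsn : s ≤ n := by nlinarith
  set b : ℝ := a / s with hbdef
  have hb0 : 0 < b := div_pos ha hs0
  set h : Fin n → ℝ → ℝ := fun i t => |t| ^ (2 * β i) * Real.exp (-b * |t|) with hh
  -- pointwise bound
  have hpt : ∀ ξ : EuclideanSpace ℝ (Fin n),
      |∏ i, ξ i ^ (2 * β i)| * Real.exp (-a * ‖ξ‖) ≤ ∏ i, h i (ξ i) := by
    intro ξ
    have h1 : |∏ i, ξ i ^ (2 * β i)| = ∏ i, |ξ i| ^ (2 * β i) := by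
      rw [Finset.abs_prod]
      exact Finset.prod_congr rfl fun i _ => abs_pow _ _
    have hnorm : ∑ i, |ξ i| ≤ s * ‖ξ‖ := by
      have hsum : (∑ i, |ξ i|) ^ 2 ≤ (n:ℝ) * ∑ i, |ξ i| ^ 2 := by
        simpa using sq_sum_le_card_mul_sum_sq
          (s := (Finset.univ : Finset (Fin n))) (f := fun i => |ξ i|)
      have hnn : ‖ξ‖ = Real.sqrt (∑ i, |ξ i| ^ 2) := by
        simp [EuclideanSpace.norm_eq, Real.norm_eq_abs]
      rw [hnn, hsdef, ← Real.sqrt_mul hn0.le]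
      calc ∑ i, |ξ i| = Real.sqrt ((∑ i, |ξ i|) ^ 2) :=
            (Real.sqrt_sq (Finset.sum_nonneg fun i _ => abs_nonneg _)).symm
        _ ≤ Real.sqrt ((n:ℝ) * ∑ i, |ξ i| ^ 2) := Real.sqrt_le_sqrt hsum
    have h2 : Real.exp (-a * ‖ξ‖) ≤ ∏ i, Real.exp (-b * |ξ i|) := by
      rw [← Real.exp_sum]
      apply Real.exp_le_exp.mpr
      have : ∑ i, -b * |ξ i| = -b * ∑ i, |ξ i| := by rw [← Finset.mul_sum]
      rw [this, hbdef]
      rw [neg_mul, neg_mul, neg_le_neg_iff, div_mul_eq_mul_div, div_le_iff₀ hs0]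
      calc a * ∑ i, |ξ i| ≤ a * (s * ‖ξ‖) := by
            exact mul_le_mul_of_nonneg_left hnorm ha.le
        _ = a * ‖ξ‖ * s := by ring
    calc |∏ i, ξ i ^ (2 * β i)| * Real.exp (-a * ‖ξ‖)
        ≤ (∏ i, |ξ i| ^ (2 * β i)) * ∏ i, Real.exp (-b * |ξ i|) := by
          rw [h1]
          exact mul_le_mul_of_nonneg_left h2 (Finset.prod_nonneg fun i _ => by positivity)
      _ = ∏ i, h i (ξ i) := by rw [← Finset.prod_mul_distrib]
  -- integrability
  have hint_pi : Integrable (fun x : Fin n → ℝ => ∏ i, h i (x i)) :=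
    Integrable.fintype_prod (f := h) fun i => integrable1d hb0 (2 * β i)
  have mp := EuclideanSpace.volume_preserving_symm_measurableEquiv_toLp (Fin n)
  have hint : Integrable (fun ξ : EuclideanSpace ℝ (Fin n) => ∏ i, h i (ξ i)) := by
    have := (mp.integrable_comp_emb
      (MeasurableEquiv.toLp 2 (Fin n → ℝ)).symm.measurableEmbedding).mpr hint_pi
    exact this
  -- value of the dominating integral
  have key : (∫ ξ : EuclideanSpace ℝ (Fin n), ∏ i, h i (ξ i))
      = ∏ i, (2 * (((2 * β i).factorial : ℝ) / b ^ (2 * β i + 1))) := by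
    have e1 : (∫ ξ : EuclideanSpace ℝ (Fin n), ∏ i, h i (ξ i))
        = ∫ x : Fin n → ℝ, ∏ i, h i (x i) :=
      mp.integral_comp' (fun x => ∏ i, h i (x i))
    rw [e1, integral_fintype_prod_volume_eq_prod (f := h)]
    exact Finset.prod_congr rfl fun i _ => oneDIntegral hb0 (2 * β i)
  -- main integral bound
  set I : ℝ := ∫ ξ : EuclideanSpace ℝ (Fin n),
      |∏ i, ξ i ^ (2 * β i)| * Real.exp (-a * ‖ξ‖) with hI
  have hI0 : 0 ≤ I := integral_nonneg fun ξ => by positivity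
  have hIle : I ≤ ∏ i, (2 * (((2 * β i).factorial : ℝ) / b ^ (2 * β i + 1))) := by
    rw [← key]
    exact integral_mono_of_nonneg (ae_of_all _ fun ξ => by positivity) hint (ae_of_all _ hpt)
  -- compare with R^2
  set X : ℝ := 2 * n / a with hX
  have hX0 : 0 < X := by positivity
  set R : ℝ := X ^ ((n : ℝ) / 2) * ((∏ i, Nat.factorial (β i) : ℕ) : ℝ) * X ^ (∑ i, β i)
    with hR
  have hR0 : 0 ≤ R := by positivity
  have hprod : (∏ i, (2 * (((2 * β i).factorial : ℝ) / b ^ (2 * β i + 1)))) ≤ R ^ 2 := by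
    have hRsq : R ^ 2 = ∏ i, (X * ((β i).factorial : ℝ)^2 * (X^2)^(β i)) := by
      have hXn : (X ^ ((n:ℝ)/2))^2 = X ^ n := by
        rw [← Real.rpow_natCast (X ^ ((n:ℝ)/2)) 2, ← Real.rpow_mul hX0.le]
        rw [show (n:ℝ)/2 * ((2:ℕ):ℝ) = ((n:ℕ):ℝ) by push_cast; ring, Real.rpow_natCast]
      calc R^2 = X^n * (∏ i, ((β i).factorial:ℝ))^2 * (X ^ (∑ i, β i))^2 := by
            rw [hR, mul_pow, mul_pow, hXn, Nat.cast_prod]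
        _ = ∏ i, (X * ((β i).factorial : ℝ)^2 * (X^2)^(β i)) := by
            rw [Finset.prod_mul_distrib, Finset.prod_mul_distrib, Finset.prod_const,
              Finset.card_univ, Fintype.card_fin, Finset.prod_pow_eq_pow_sum,
              ← Finset.prod_pow, ← pow_mul, ← pow_mul, mul_comm (∑ i, β i) 2]
    rw [hRsq]
    refine Finset.prod_le_prod (fun i _ => by positivity) (fun i _ => ?_)
    exact factor_le ha hs0 hsn (β i)
  have hfin : I ^ ((1:ℝ)/2) ≤ R := by
    rw [← Real.sqrt_eq_rpow]
    calc Real.sqrt I ≤ Real.sqrt (R ^ 2) := Real.sqrt_le_sqrt (hIle.trans hprod)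
      _ = R := Real.sqrt_sq hR0
  exact hfin
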